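/- Let V be a real normed vector space, a : V × V → ℝ a bilinear form, S a linear subspace of V, and F, G : V → ℝ linear functionals. Let C_a, δ₁, δ₂ ≥ 0 and let w, w_h, φ ∈ V and φ_h ∈ S satisfy: (i) a(w, φ) = F(φ); (ii) a(w_h, v) = F(v) for all v ∈ S; (iii) |a(x, y)| ≤ C_a‖x‖‖y‖ for all x, y ∈ V; (iv) |a(v, φ) − G(v)| ≤ δ₁‖v‖ for all v ∈ V; (v) |a(w, v) − F(v)| ≤ δ₂‖v‖ for all v ∈ V. Then |G(w − w_h)| ≤ δ₁‖w − w_h‖ + δ₂‖φ − φ_h‖ + C_a‖w − w_h‖‖φ − φ_h‖. -/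

import Mathlib

/-- Quantitative abstract form of the duality (Aubin–Nitsche type) estimate proved
in Theorem 2.3 for the nonconforming Crouzeix–Raviart method. -/
theorem abstract_duality_estimate
    {V : Type*} [NormedAddCommGroup V] [NormedSpace ℝ V]
    (a : V →ₗ[ℝ] V →ₗ[ℝ] ℝ) (S : Submodule ℝ V)
    (F G : V →ₗ[ℝ] ℝ)
    (C_a δ₁ δ₂ : ℝ) (hC_a : 0 ≤ C_a) (hδ₁ : 0 ≤ δ₁) (hδ₂ : 0 ≤ δ₂)
    (w w_h φ : V) (φ_h : V) (hφ_h : φ_h ∈ S)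
    (hi : a w φ = F φ)
    (hii : ∀ v ∈ S, a w_h v = F v)
    (hiii : ∀ x y : V, |a x y| ≤ C_a * ‖x‖ * ‖y‖)
    (hiv : ∀ v : V, |a v φ - G v| ≤ δ₁ * ‖v‖)
    (hv : ∀ v : V, |a w v - F v| ≤ δ₂ * ‖v‖) :
    |G (w - w_h)| ≤
      δ₁ * ‖w - w_h‖ + δ₂ * ‖φ - φ_h‖ + C_a * ‖w - w_h‖ * ‖φ - φ_h‖ := by
  set e := w - w_h with he
  have key : G e = -(a e φ - G e) + (a e (φ - φ_h) - (a w (φ - φ_h) - F (φ - φ_h))) := by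
    have h1 : a w_h φ_h = F φ_h := hii φ_h hφ_h
    simp only [he, map_sub, LinearMap.sub_apply]
    ring_nf
    linarith [hi, h1]
  calc |G e| = |-(a e φ - G e) + (a e (φ - φ_h) - (a w (φ - φ_h) - F (φ - φ_h)))| := by
        rw [← key]
    _ ≤ |a e φ - G e| + (|a e (φ - φ_h)| + |a w (φ - φ_h) - F (φ - φ_h)|) := by
        calc _ ≤ |-(a e φ - G e)| + |a e (φ - φ_h) - (a w (φ - φ_h) - F (φ - φ_h))| :=
              abs_add_le _ _
          _ ≤ _ := by rw [abs_neg]; exact add_le_add_right (abs_sub _ _) _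
    _ ≤ δ₁ * ‖e‖ + (C_a * ‖e‖ * ‖φ - φ_h‖ + δ₂ * ‖φ - φ_h‖) := by
        gcongr
        · exact hiv e
        · exact hiii e _
        · exact hv _
    _ = δ₁ * ‖e‖ + δ₂ * ‖φ - φ_h‖ + C_a * ‖e‖ * ‖φ - φ_h‖ := by ring
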